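/- There is a unique upper unitriangular m×m matrix U over GF(2) such that the pair (I, U) is progressive; equivalently, a unique upper unitriangular matrix all of whose shifted leading minors are nonzero. -/
import Mathlib


open Matrix

/-- The binary Pascal matrix over GF(2): entries C(j-1, i-1) mod 2 (1-indexed),
i.e. C(j, i) with 0-indexed `Fin`. -/
def pascal (m : ℕ) : Matrix (Fin m) (Fin m) (ZMod 2) :=
  fun i j => (Nat.choose j.val i.val : ZMod 2)

/-- The anti-diagonal matrix over GF(2), with ones on the anti-diagonal. -/
def antiDiag (m : ℕ) : Matrix (Fin m) (Fin m) (ZMod 2) :=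
  fun i j => if i.val + j.val + 1 = m then 1 else 0
/-- Lower unitriangular matrix over GF(2). -/
def IsLowerUni {m : ℕ} (L : Matrix (Fin m) (Fin m) (ZMod 2)) : Prop :=
  (∀ i, L i i = 1) ∧ ∀ i j : Fin m, i < j → L i j = 0

/-- Upper unitriangular matrix over GF(2). -/
def IsUpperUni {m : ℕ} (U : Matrix (Fin m) (Fin m) (ZMod 2)) : Prop :=
  (∀ i, U i i = 1) ∧ ∀ i j : Fin m, j < i → U i j = 0
/-- The hybrid matrix whose first `m - r` rows are the first `m - r` rows of `Cx`
and whose last `r` rows are the first `r` rows of `Cy`. -/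
def hybrid (m r : ℕ) (Cx Cy : Matrix (Fin m) (Fin m) (ZMod 2)) :
    Matrix (Fin m) (Fin m) (ZMod 2) :=
  fun i j =>
    if i.val < m - r then Cx i j
    else Cy ⟨i.val - (m - r), Nat.lt_of_le_of_lt (Nat.sub_le _ _) i.isLt⟩ j

/-- A dyadic pair: all hybrid matrices are invertible. -/
def DyadicPair {m : ℕ} (Cx Cy : Matrix (Fin m) (Fin m) (ZMod 2)) : Prop :=
  ∀ r ≤ m, (hybrid m r Cx Cy).det ≠ 0
/-- A progressive pair: for all `r ≤ k ≤ m`, the hybrid matrix built from the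
leading `k × k` blocks of `Cx` and `Cy` is invertible. -/
def ProgressivePair {m : ℕ} (Cx Cy : Matrix (Fin m) (Fin m) (ZMod 2)) : Prop :=
  ∀ k, ∀ hk : k ≤ m, ∀ r ≤ k,
    (hybrid k r (Cx.submatrix (Fin.castLE hk) (Fin.castLE hk))
                (Cy.submatrix (Fin.castLE hk) (Fin.castLE hk))).det ≠ 0

set_option linter.unusedTactic false in
set_option linter.unreachableTactic false in


lemma zmod2_ne_zero_iff : ∀ a : ZMod 2, a ≠ 0 ↔ a = 1 := by decide

lemma nat_vandermonde (c u i : ℕ) :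
    (c + u).choose i = ∑ s ∈ Finset.range (i + 1), c.choose (i - s) * u.choose s := by
  rw [add_comm c u, Nat.add_choose_eq, Finset.Nat.sum_antidiagonal_eq_sum_range_succ_mk]
  exact Finset.sum_congr rfl fun s hs => mul_comm _ _

lemma det_pascal_shift (r c : ℕ) :
    (Matrix.of fun (i u : Fin r) => ((c + u.val).choose i.val : ZMod 2)).det = 1 := by
  have hfac : (Matrix.of fun (i u : Fin r) => ((c + u.val).choose i.val : ZMod 2)) =
      (Matrix.of fun (i s : Fin r) =>
        if s.val ≤ i.val then ((c.choose (i.val - s.val) : ZMod 2)) else 0) *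
      (Matrix.of fun (s u : Fin r) => ((u.val.choose s.val : ZMod 2))) := by
    ext i u
    simp only [Matrix.mul_apply, Matrix.of_apply]
    rw [Fin.sum_univ_eq_sum_range
      (fun s => (if s ≤ i.val then ((c.choose (i.val - s) : ZMod 2)) else 0) *
        ((u.val.choose s : ZMod 2)))]
    rw [← Finset.sum_subset (Finset.range_subset_range.2 (Nat.succ_le_of_lt i.isLt))
      (fun x hx hnx => by
        simp only [Finset.mem_range] at hx hnx
        rw [if_neg (by omega), zero_mul])]
    rw [Finset.sum_congr rfl (fun s hs => by
      simp only [Finset.mem_range] at hs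
      rw [if_pos (by omega)])]
    rw [nat_vandermonde]
    push_cast
    rfl
  rw [hfac, Matrix.det_mul]
  rw [Matrix.det_of_lowerTriangular _ (by
    intro i j hij
    simp only [OrderDual.toDual_lt_toDual, Matrix.of_apply] at *
    rw [if_neg (by exact fun h => absurd (Fin.le_def.2 h) (not_le.2 hij))])]
  rw [Matrix.det_of_upperTriangular (by
    intro i j hij
    simp only [id] at hij
    simp only [Matrix.of_apply]
    rw [Nat.choose_eq_zero_of_lt hij, Nat.cast_zero])]
  simp [Nat.choose_self]

lemma det_hybrid_one_pascal (k r : ℕ) (hrk : r ≤ k) :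
    (hybrid k r 1 (pascal k)).det = 1 := by
  have hkr : (k - r) + r = k := Nat.sub_add_cancel hrk
  set e : Fin (k - r) ⊕ Fin r ≃ Fin k := finSumFinEquiv.trans (finCongr hkr) with he
  rw [← Matrix.det_submatrix_equiv_self e]
  have hblk : (hybrid k r 1 (pascal k)).submatrix e e =
      Matrix.fromBlocks 1 0
        (Matrix.of fun (i : Fin r) (b : Fin (k - r)) => ((b.val.choose i.val : ZMod 2)))
        (Matrix.of fun (i u : Fin r) => ((((k - r) + u.val).choose i.val : ZMod 2))) := by
    ext a b
    have eval : ∀ x : Fin (k - r) ⊕ Fin r, (e x).val =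
        Sum.elim (fun (a : Fin (k-r)) => a.val) (fun (a : Fin r) => (k - r) + a.val) x := by
      rintro (x | x) <;> simp [he, finSumFinEquiv]
    rcases a with a | a <;> rcases b with b | b <;>
      simp only [Matrix.submatrix_apply, Matrix.fromBlocks_apply₁₁, Matrix.fromBlocks_apply₁₂,
        Matrix.fromBlocks_apply₂₁, Matrix.fromBlocks_apply₂₂, hybrid, Matrix.of_apply]
    · rw [if_pos (by rw [eval]; exact a.isLt)]
      rw [Matrix.one_apply, Matrix.one_apply]
      simp
    · rw [if_pos (by rw [eval]; exact a.isLt)]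
      rw [Matrix.one_apply, if_neg, Matrix.zero_apply]
      intro h
      have := congrArg Fin.val h
      rw [eval, eval] at this
      simp only [Sum.elim_inl, Sum.elim_inr] at this
      omega
    · rw [if_neg (by rw [eval]; simp only [Sum.elim_inr]; omega)]
      have h1 : (e (Sum.inr a)).val = (k - r) + a.val := eval (Sum.inr a)
      have h2 : (e (Sum.inl b)).val = b.val := eval (Sum.inl b)
      show ((((e (Sum.inl b)).val).choose ((e (Sum.inr a)).val - (k - r)) : ℕ) : ZMod 2) = _
      rw [h1, h2, Nat.add_sub_cancel_left]
    · rw [if_neg (by rw [eval]; simp only [Sum.elim_inr]; omega)]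
      have h1 : (e (Sum.inr a)).val = (k - r) + a.val := eval (Sum.inr a)
      have h2 : (e (Sum.inr b)).val = (k - r) + b.val := eval (Sum.inr b)
      show ((((e (Sum.inr b)).val).choose ((e (Sum.inr a)).val - (k - r)) : ℕ) : ZMod 2) = _
      rw [h1, h2, Nat.add_sub_cancel_left]
  rw [hblk, Matrix.det_fromBlocks_zero₁₂, Matrix.det_one, one_mul, det_pascal_shift]

lemma hybrid_apply_lt {k r : ℕ} (Cx Cy : Matrix (Fin k) (Fin k) (ZMod 2)) (a b : Fin k)
    (h : a.val < k - r) : hybrid k r Cx Cy a b = Cx a b := by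
  simp only [hybrid, if_pos h]

lemma hybrid_apply_ge {k r : ℕ} (Cx Cy : Matrix (Fin k) (Fin k) (ZMod 2)) (a b : Fin k)
    (h : ¬ a.val < k - r) (a' : Fin k) (ha' : a'.val = a.val - (k - r)) :
    hybrid k r Cx Cy a b = Cy a' b := by
  simp only [hybrid, if_neg h]
  congr 1
  exact Fin.ext ha'.symm

lemma hybrid_castSucc (k r : ℕ) (A B : Matrix (Fin (k+1)) (Fin (k+1)) (ZMod 2)) :
    (hybrid (k+1) (r+1) A B).submatrix Fin.castSucc Fin.castSucc
      = hybrid k r (A.submatrix Fin.castSucc Fin.castSucc) (B.submatrix Fin.castSucc Fin.castSucc) := by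
  ext a b
  simp only [Matrix.submatrix_apply]
  by_cases h : a.val < k - r
  · rw [hybrid_apply_lt _ _ _ _ h, hybrid_apply_lt _ _ _ _ (show (a.castSucc).val < (k+1) - (r+1) by simpa using h)]
    rfl
  · rw [hybrid_apply_ge _ _ _ _ h ⟨a.val - (k - r), by omega⟩ rfl,
      hybrid_apply_ge _ _ _ _ (show ¬ (a.castSucc).val < (k+1) - (r+1) by simpa using h)
        (Fin.castSucc ⟨a.val - (k - r), by omega⟩) (by simp)]
    rfl

lemma last_entry_eq {K R : ℕ} (hRK : R < K)
    (A B : Matrix (Fin (K+1)) (Fin (K+1)) (ZMod 2))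
    (hab : ∀ a b : Fin (K+1), b.val < K ∨ (b.val = K ∧ a.val < R) → A a b = B a b)
    (hA : (hybrid (K+1) (R+1) 1 A).det ≠ 0)
    (hB : (hybrid (K+1) (R+1) 1 B).det ≠ 0)
    (hC : (hybrid K R 1 (A.submatrix Fin.castSucc Fin.castSucc)).det ≠ 0) :
    A ⟨R, by omega⟩ (Fin.last K) = B ⟨R, by omega⟩ (Fin.last K) := by
  set aR : Fin (K+1) := ⟨R, by omega⟩ with haR
  set d : ZMod 2 := B aR (Fin.last K) - A aR (Fin.last K) with hd
  have key : hybrid (K+1) (R+1) 1 B =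
      (hybrid (K+1) (R+1) 1 A).updateCol (Fin.last K)
        ((fun x => hybrid (K+1) (R+1) 1 A x (Fin.last K)) + d • (Pi.single (Fin.last K) (1 : ZMod 2) : Fin (K+1) → ZMod 2)) := by
    ext a b
    rw [Matrix.updateCol_apply]
    by_cases hb : b = Fin.last K
    · rw [if_pos hb]
      subst hb
      simp only [Pi.add_apply, Pi.smul_apply, Pi.single_apply, smul_eq_mul]
      by_cases ha : a.val < (K+1) - (R+1)
      · rw [hybrid_apply_lt _ _ _ _ ha, hybrid_apply_lt _ _ _ _ ha,
          if_neg (show a ≠ Fin.last K from fun h => by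
            rw [h] at ha; simp only [Fin.val_last] at ha; omega),
          mul_zero, add_zero]
      · by_cases haa : a = Fin.last K
        · rw [hybrid_apply_ge _ _ _ _ ha aR (by rw [haR]; subst haa; simp only [Fin.val_last]; omega),
            hybrid_apply_ge _ _ _ _ ha aR (by rw [haR]; subst haa; simp only [Fin.val_last]; omega),
            if_pos haa, mul_one, hd]
          ring
        · have haK : a.val < K := by
            have h1 : a.val ≠ K := fun h => haa (Fin.ext (by simpa using h))
            have := a.isLt; omega
          rw [hybrid_apply_ge _ _ _ _ ha ⟨a.val - ((K+1) - (R+1)), by omega⟩ rfl,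
            hybrid_apply_ge _ _ _ _ ha ⟨a.val - ((K+1) - (R+1)), by omega⟩ rfl,
            if_neg haa, mul_zero, add_zero]
          exact (hab _ _ (Or.inr ⟨Fin.val_last K, by simp; omega⟩)).symm
    · rw [if_neg hb]
      have hbK : b.val < K := by
        have h1 : b.val ≠ K := fun h => hb (Fin.ext (by simpa using h))
        have := b.isLt; omega
      by_cases ha : a.val < (K+1) - (R+1)
      · rw [hybrid_apply_lt _ _ _ _ ha, hybrid_apply_lt _ _ _ _ ha]
      · rw [hybrid_apply_ge _ _ _ _ ha ⟨a.val - ((K+1) - (R+1)), by omega⟩ rfl,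
          hybrid_apply_ge _ _ _ _ ha ⟨a.val - ((K+1) - (R+1)), by omega⟩ rfl]
        exact (hab _ _ (Or.inl hbK)).symm
  set N := (hybrid (K+1) (R+1) 1 A).updateCol (Fin.last K) (Pi.single (Fin.last K) (1 : ZMod 2)) with hN
  have hdetB : (hybrid (K+1) (R+1) 1 B).det
      = (hybrid (K+1) (R+1) 1 A).det + d * N.det := by
    rw [key, Matrix.det_updateCol_add, Matrix.det_updateCol_smul,
      Matrix.updateCol_eq_self]
  have hNs : N.submatrix Fin.castSucc Fin.castSucc
      = hybrid K R 1 (A.submatrix Fin.castSucc Fin.castSucc) := by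
    have h1 : N.submatrix Fin.castSucc Fin.castSucc
        = (hybrid (K+1) (R+1) 1 A).submatrix Fin.castSucc Fin.castSucc := by
      ext a b
      simp only [Matrix.submatrix_apply, hN, Matrix.updateCol_apply]
      rw [if_neg (Fin.castSucc_lt_last b).ne]
    rw [h1, hybrid_castSucc, Matrix.submatrix_one _ (Fin.castSucc_injective K)]
  have hdetN : N.det = (hybrid K R 1 (A.submatrix Fin.castSucc Fin.castSucc)).det := by
    rw [Matrix.det_succ_column N (Fin.last K)]
    rw [Finset.sum_eq_single (Fin.last K)
      (fun x _ hx => by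
        have hx0 : N x (Fin.last K) = 0 := by
          simp [N, Matrix.updateCol_apply, Pi.single_apply, hx]
        rw [hx0, mul_zero, zero_mul])
      (fun h => absurd (Finset.mem_univ _) h)]
    have hNlast : N (Fin.last K) (Fin.last K) = 1 := by
      simp [N, Matrix.updateCol_apply, Pi.single_apply]
    rw [hNlast, Fin.succAbove_last, hNs, mul_one,
      show ((-1 : ZMod 2)) = 1 from by decide, one_pow, one_mul]
  have h1 : (hybrid (K+1) (R+1) 1 A).det = 1 := (zmod2_ne_zero_iff _).1 hA
  have h2 : (hybrid (K+1) (R+1) 1 B).det = 1 := (zmod2_ne_zero_iff _).1 hB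
  have h3 : N.det ≠ 0 := by rw [hdetN]; exact hC
  rw [h1, h2] at hdetB
  have hmul : d * N.det = 0 := (left_eq_add.mp hdetB)
  have hd0 : d = 0 := by
    rcases mul_eq_zero.mp hmul with h | h
    · exact h
    · exact absurd h h3
  exact (sub_eq_zero.mp (hd ▸ hd0)).symm

lemma one_block {m k : ℕ} (hk : k ≤ m) :
    ((1 : Matrix (Fin m) (Fin m) (ZMod 2)).submatrix (Fin.castLE hk) (Fin.castLE hk)) = 1 :=
  Matrix.submatrix_one _ (Fin.castLE_injective hk)

lemma pascal_block {m k : ℕ} (hk : k ≤ m) :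
    (pascal m).submatrix (Fin.castLE hk) (Fin.castLE hk) = pascal k := rfl

lemma pascal_progressive (m : ℕ) : ProgressivePair 1 (pascal m) := by
  intro k hk r hr
  rw [one_block hk, pascal_block hk, det_hybrid_one_pascal k r hr]
  exact one_ne_zero

lemma progressive_uniq {m : ℕ} (U V : Matrix (Fin m) (Fin m) (ZMod 2))
    (hUu : IsUpperUni U) (hVu : IsUpperUni V)
    (hUp : ProgressivePair 1 U) (hVp : ProgressivePair 1 V) : U = V := by
  have key : ∀ n : ℕ, ∀ i j : Fin m, j.val * m + i.val = n → U i j = V i j := by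
    intro n
    induction n using Nat.strong_induction_on with
    | _ n ih =>
    intro i j hn
    subst hn
    have IH : ∀ i' j' : Fin m, j'.val * m + i'.val < j.val * m + i.val → U i' j' = V i' j' :=
      fun i' j' h => ih _ h i' j' rfl
    rcases lt_trichotomy i.val j.val with hij | hij | hij
    · -- main case
      have hk : j.val + 1 ≤ m := j.isLt
      have hk' : j.val ≤ m := le_of_lt j.isLt
      have hr' : i.val ≤ j.val := le_of_lt hij
      -- blocks
      have hHU := hUp (j.val + 1) hk (i.val + 1) (by omega)
      have hHV := hVp (j.val + 1) hk (i.val + 1) (by omega)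
      rw [one_block hk] at hHU hHV
      have hCU := hUp j.val hk' i.val hr'
      rw [one_block hk'] at hCU
      have hsub : (U.submatrix (Fin.castLE hk) (Fin.castLE hk)).submatrix
          Fin.castSucc Fin.castSucc = U.submatrix (Fin.castLE hk') (Fin.castLE hk') := by
        rw [Matrix.submatrix_submatrix]
        congr 1
      rw [← hsub] at hCU
      have hagree : ∀ a b : Fin (j.val + 1), b.val < j.val ∨ (b.val = j.val ∧ a.val < i.val) →
          (U.submatrix (Fin.castLE hk) (Fin.castLE hk)) a b
            = (V.submatrix (Fin.castLE hk) (Fin.castLE hk)) a b := by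
        intro a b hcase
        simp only [Matrix.submatrix_apply]
        apply IH
        simp only [Fin.coe_castLE]
        rcases hcase with h | ⟨h1, h2⟩
        · have ham : a.val < m := lt_of_lt_of_le a.isLt hk
          have hbm : (b.val + 1) * m ≤ j.val * m := Nat.mul_le_mul_right m (by omega)
          rw [Nat.succ_mul] at hbm
          omega
        · rw [h1]; omega
      have := last_entry_eq hij
        (U.submatrix (Fin.castLE hk) (Fin.castLE hk))
        (V.submatrix (Fin.castLE hk) (Fin.castLE hk))
        hagree hHU hHV hCU
      simp only [Matrix.submatrix_apply] at this
      have e1 : Fin.castLE hk ⟨i.val, by omega⟩ = i := Fin.ext rfl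
      have e2 : Fin.castLE hk (Fin.last j.val) = j := Fin.ext (by simp)
      rwa [e1, e2] at this
    · have : i = j := Fin.ext hij
      subst this
      rw [hUu.1, hVu.1]
    · rw [hUu.2 i j (by exact hij), hVu.2 i j (by exact hij)]
  ext i j
  exact key (j.val * m + i.val) i j rfl


/-- There is a unique upper unitriangular matrix `U` over GF(2) such that
`(I, U)` is a progressive pair. -/
theorem exists_unique_upperUni_progressive (m : ℕ) :
    ∃! U : Matrix (Fin m) (Fin m) (ZMod 2),
      IsUpperUni U ∧ ProgressivePair 1 U := by
  have hpu : IsUpperUni (pascal m) := by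
    constructor
    · intro i
      simp [pascal, Nat.choose_self]
    · intro i j hji
      have : j.val < i.val := hji
      simp [pascal, Nat.choose_eq_zero_of_lt this]
  refine ⟨pascal m, ⟨hpu, pascal_progressive m⟩, ?_⟩
  rintro V ⟨hVu, hVp⟩
  exact progressive_uniq V (pascal m) hVu hpu hVp (pascal_progressive m)
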